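/- Let T be σ-saturated on S, and let u ∈ S with supp(u⁻) ⊆ σ or supp(u⁺) ⊆ σ. Then T is (supp(u) ∪ σ)-saturated on S. -/

import Mathlib

open scoped Classical

noncomputable section

variable {ι : Type*} [Fintype ι]

/-- `x ∈ ℕ^n`, i.e. all coordinates nonnegative. -/
def Nonneg (x : ι → ℤ) : Prop := ∀ i, 0 ≤ x i

/-- componentwise positive part `u⁺`. -/
def vposPart (x : ι → ℤ) : ι → ℤ := fun i => max (x i) 0

/-- componentwise negative part `u⁻`. -/
def vnegPart (x : ι → ℤ) : ι → ℤ := fun i => max (-x i) 0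

/-- support of a vector. -/
def suppV (x : ι → ℤ) : Set ι := {i | x i ≠ 0}

/-- membership in the fiber `F_{L,b} = {x ∈ ℕ^n : x ≡ b (mod L)}`. -/
def inFiber (L : AddSubgroup (ι → ℤ)) (b x : ι → ℤ) : Prop :=
  Nonneg x ∧ x - b ∈ L

/-- adjacency in the fiber graph: `x` and `y` differ by an element of `±S`. -/
def adjS (S : Set (ι → ℤ)) (x y : ι → ℤ) : Prop := x - y ∈ S ∨ y - x ∈ S

/-- `p 0, p 1, …, p k` is a path in the fiber graph `G(F_{L,b}, S)`. -/
def IsPathIn (L : AddSubgroup (ι → ℤ)) (S : Set (ι → ℤ)) (b : ι → ℤ)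
    (k : ℕ) (p : ℕ → ι → ℤ) : Prop :=
  (∀ i ≤ k, inFiber L b (p i)) ∧ ∀ i < k, adjS S (p i) (p (i+1))

/-- `x` and `y` are connected in the fiber graph `G(F_{L,b}, S)`. -/
def ConnIn (L : AddSubgroup (ι → ℤ)) (S : Set (ι → ℤ)) (b x y : ι → ℤ) : Prop :=
  ∃ k p, IsPathIn L S b k p ∧ p 0 = x ∧ p k = y

/-- `S` is a generating set of the lattice `L`: all fiber graphs are connected. -/
def IsGenSet (L : AddSubgroup (ι → ℤ)) (S : Set (ι → ℤ)) : Prop :=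
  ∀ b x y, inFiber L b x → inFiber L b y → ConnIn L S b x y

/-- `succ` (written `≻`) is a term ordering for `L`: an additive total
well-ordering on every fiber. -/
structure IsTermOrder (L : AddSubgroup (ι → ℤ))
    (succ : (ι → ℤ) → (ι → ℤ) → Prop) : Prop where
  trans : ∀ {x y z}, succ x y → succ y z → succ x z
  irrefl : ∀ x, ¬ succ x x
  total : ∀ b x y, inFiber L b x → inFiber L b y → x ≠ y → succ x y ∨ succ y x
  additive : ∀ x y γ, Nonneg γ → succ x y → succ (x + γ) (y + γ)
  wf : ∀ b, WellFounded (fun x y : ι → ℤ => inFiber L b x ∧ inFiber L b y ∧ succ y x)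

/-- `L_≻ = {u ∈ L : u⁺ ≻ u⁻}`. -/
def Lpos (L : AddSubgroup (ι → ℤ)) (succ : (ι → ℤ) → (ι → ℤ) → Prop) :
    Set (ι → ℤ) :=
  {u | u ∈ L ∧ succ (vposPart u) (vnegPart u)}

/-- `m` is the `≻`-minimal element of the fiber `F_{L,b}`. -/
def IsMinimalFiber (L : AddSubgroup (ι → ℤ)) (b : ι → ℤ)
    (succ : (ι → ℤ) → (ι → ℤ) → Prop) (m : ι → ℤ) : Prop :=
  inFiber L b m ∧ ∀ y, inFiber L b y → y ≠ m → succ y m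

/-- `G` is a `≻`-Gröbner basis of `L`: from every `x ∈ ℕ^n` there is a
`≻`-decreasing path in `G(F_{L,x},G)` to the `≻`-minimal element of `F_{L,x}`. -/
def IsGroebner (L : AddSubgroup (ι → ℤ)) (succ : (ι → ℤ) → (ι → ℤ) → Prop)
    (G : Set (ι → ℤ)) : Prop :=
  ∀ x, Nonneg x → ∃ m, IsMinimalFiber L x succ m ∧
    ∃ k p, IsPathIn L G x k p ∧ p 0 = x ∧ p k = m ∧ ∀ i < k, succ (p i) (p (i+1))

/-- there is a `≻`-reduction path from `x` to `y` in `G(F_{L,b},G)`: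
no intermediate node is `≻` than both endpoints. -/
def IsRedPath (L : AddSubgroup (ι → ℤ)) (G : Set (ι → ℤ)) (b : ι → ℤ)
    (succ : (ι → ℤ) → (ι → ℤ) → Prop) (x y : ι → ℤ) : Prop :=
  ∃ k p, IsPathIn L G b k p ∧ p 0 = x ∧ p k = y ∧
    ∀ i, 0 < i → i < k → ¬ (succ (p i) x ∧ succ (p i) y)

/-- `(x,z,y)` is a `≻`-critical path in `G(F_{L,b},G)`. -/
def IsCriticalIn (L : AddSubgroup (ι → ℤ)) (G : Set (ι → ℤ)) (b : ι → ℤ)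
    (succ : (ι → ℤ) → (ι → ℤ) → Prop) (x z y : ι → ℤ) : Prop :=
  inFiber L b x ∧ inFiber L b z ∧ inFiber L b y ∧
  adjS G x z ∧ adjS G z y ∧ succ z x ∧ succ z y

/-- `z^(u,v) := max{u⁺, v⁺}` componentwise. -/
def zOf (u v : ι → ℤ) : ι → ℤ := fun i => max (vposPart u i) (vposPart v i)

/-- `x^(u,v) := z^(u,v) − u`. -/
def xOf (u v : ι → ℤ) : ι → ℤ := zOf u v - u

/-- `y^(u,v) := z^(u,v) − v`. -/
def yOf (u v : ι → ℤ) : ι → ℤ := zOf u v - v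

/-- `(x,z,y)` is a `≻`-critical path for the pair `(u,v)`. -/
def IsCriticalFor (succ : (ι → ℤ) → (ι → ℤ) → Prop) (u v x z y : ι → ℤ) : Prop :=
  Nonneg x ∧ Nonneg z ∧ Nonneg y ∧ z - x = u ∧ z - y = v ∧ succ z x ∧ succ z y

/-- rational inner product `φ·x`. -/
def qdot (φ : ι → ℚ) (x : ι → ℤ) : ℚ := ∑ i, φ i * (x i : ℚ)

/-- there is a `φ`-reduction path from `x` to `y` in `G(F_{L,b},G)`. -/
def IsPhiRedPath (L : AddSubgroup (ι → ℤ)) (G : Set (ι → ℤ)) (b : ι → ℤ)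
    (φ : ι → ℚ) (x y : ι → ℤ) : Prop :=
  ∃ k p, IsPathIn L G b k p ∧ p 0 = x ∧ p k = y ∧
    ∀ i, 0 < i → i < k → ¬ (qdot φ x < qdot φ (p i) ∧ qdot φ y < qdot φ (p i))

/-- `G` is a `φ`-Gröbner basis of `L`. -/
def IsPhiGroebner (L : AddSubgroup (ι → ℤ)) (φ : ι → ℚ) (G : Set (ι → ℤ)) : Prop :=
  ∀ b x y, inFiber L b x → inFiber L b y → IsPhiRedPath L G b φ x y

/-- `x ∧_σ y`: componentwise min on `σ`, zero elsewhere. -/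
def meetOn (σ : Set ι) (x y : ι → ℤ) : ι → ℤ :=
  fun i => if i ∈ σ then min (x i) (y i) else 0

/-- `T` is `σ`-saturated on `S`. -/
def IsSaturatedOn (L : AddSubgroup (ι → ℤ)) (σ : Set ι) (S T : Set (ι → ℤ)) : Prop :=
  ∀ b x y, inFiber L b x → inFiber L b y → ConnIn L S b x y →
    ConnIn L T (b - meetOn σ x y) (x - meetOn σ x y) (y - meetOn σ x y)

/-- membership in `F^σ_{L,b}`: nonnegative outside `σ`. -/
def inFiberFree (L : AddSubgroup (ι → ℤ)) (σ : Set ι) (b x : ι → ℤ) : Prop :=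
  (∀ i, i ∉ σ → 0 ≤ x i) ∧ x - b ∈ L

/-- path in the graph `G(F^σ_{L,b}, S)`. -/
def IsPathFree (L : AddSubgroup (ι → ℤ)) (σ : Set ι) (S : Set (ι → ℤ)) (b : ι → ℤ)
    (k : ℕ) (p : ℕ → ι → ℤ) : Prop :=
  (∀ i ≤ k, inFiberFree L σ b (p i)) ∧ ∀ i < k, adjS S (p i) (p (i+1))

/-- connectivity in `G(F^σ_{L,b}, S)`. -/
def ConnFree (L : AddSubgroup (ι → ℤ)) (σ : Set ι) (S : Set (ι → ℤ))
    (b x y : ι → ℤ) : Prop :=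
  ∃ k p, IsPathFree L σ S b k p ∧ p 0 = x ∧ p k = y

/-- `S` is a `σ`-generating set of `L`. -/
def IsGenSetFree (L : AddSubgroup (ι → ℤ)) (σ : Set ι) (S : Set (ι → ℤ)) : Prop :=
  ∀ b x y, inFiberFree L σ b x → inFiberFree L σ b y → ConnFree L σ S b x y

/-- there is a `z`-bounded path from `x` to `y` in `G(F_{L,b},G)`:
all nodes are `≺ z`. -/
def IsBoundedPath (L : AddSubgroup (ι → ℤ)) (G : Set (ι → ℤ)) (b : ι → ℤ)
    (succ : (ι → ℤ) → (ι → ℤ) → Prop) (z x y : ι → ℤ) : Prop :=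
  ∃ k p, IsPathIn L G b k p ∧ p 0 = x ∧ p k = y ∧ ∀ i ≤ k, succ z (p i)

/-- `ē^i = −e^i` as a rational vector. -/
def ebar [DecidableEq ι] (i : ι) : ι → ℚ := fun j => if j = i then -1 else 0

/-- projection deleting the `i`-th coordinate. -/
def projCoord {n : ℕ} (i : Fin (n+1)) : (Fin (n+1) → ℤ) →+ (Fin n → ℤ) where
  toFun x := fun j => x (i.succAbove j)
  map_zero' := rfl
  map_add' _ _ := rfl

/-- projection onto the coordinates outside `σ`. -/
def projSet {n : ℕ} (σ : Finset (Fin n)) :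
    (Fin n → ℤ) →+ ({ i : Fin n // i ∉ σ } → ℤ) where
  toFun x := fun j => x j.1
  map_zero' := rfl
  map_add' _ _ := rfl

end

section StmtNineHelpers

variable {n : ℕ} {L : AddSubgroup (Fin n → ℤ)} {S T : Set (Fin n → ℤ)} {σ : Set (Fin n)}

theorem connIn_trans' {b x y z : Fin n → ℤ} (h1 : ConnIn L S b x y) (h2 : ConnIn L S b y z) :
    ConnIn L S b x z := by
  obtain ⟨k1, p1, ⟨m1, a1⟩, e10, e1k⟩ := h1
  obtain ⟨k2, p2, ⟨m2, a2⟩, e20, e2k⟩ := h2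
  refine ⟨k1 + k2, fun t => if t ≤ k1 then p1 t else p2 (t - k1), ⟨?_, ?_⟩, ?_, ?_⟩
  · intro i hi
    by_cases h : i ≤ k1
    · simpa [h] using m1 i h
    · simpa [h] using m2 (i - k1) (by omega)
  · intro i hi
    by_cases h : i + 1 ≤ k1
    · simpa [h, show i ≤ k1 by omega] using a1 i (by omega)
    · have hq : (if i ≤ k1 then p1 i else p2 (i - k1)) = p2 (i - k1) := by
        by_cases h' : i ≤ k1
        · have hik : i = k1 := by omega
          simp [h', hik, e1k, e20]
        · simp [h']
      simp only [hq, h, if_false]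
      have hstep : i + 1 - k1 = (i - k1) + 1 := by omega
      rw [hstep]
      exact a2 (i - k1) (by omega)
  · simp [e10]
  · by_cases h : k2 = 0
    · have hz : z = y := by rw [← e2k, h, e20]
      simp [h, e1k, hz]
    · have h' : ¬ (k1 + k2 ≤ k1) := by omega
      simp only [h', if_false]
      rw [show k1 + k2 - k1 = k2 by omega, e2k]

theorem connIn_congr {b1 b2 x y : Fin n → ℤ} (hb : b1 - b2 ∈ L) (h : ConnIn L S b1 x y) :
    ConnIn L S b2 x y := by
  obtain ⟨k, p, ⟨m, a⟩, e0, ek⟩ := h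
  refine ⟨k, p, ⟨?_, a⟩, e0, ek⟩
  intro i hi
  obtain ⟨hn, hl⟩ := m i hi
  refine ⟨hn, ?_⟩
  have : p i - b2 = (p i - b1) + (b1 - b2) := by ring
  rw [this]
  exact L.add_mem hl hb

theorem connIn_translate' {b x y : Fin n → ℤ} (h : ConnIn L S b x y) (c : Fin n → ℤ)
    (hc : Nonneg c) : ConnIn L S (b + c) (x + c) (y + c) := by
  obtain ⟨k, p, ⟨m, a⟩, e0, ek⟩ := h
  refine ⟨k, fun t => p t + c, ⟨?_, ?_⟩, by show p 0 + c = x + c; rw [e0], by show p k + c = y + c; rw [ek]⟩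
  · intro i hi
    obtain ⟨hn, hl⟩ := m i hi
    refine ⟨fun j => add_nonneg (hn j) (hc j), ?_⟩
    have : p i + c - (b + c) = p i - b := by ring
    rw [this]; exact hl
  · intro i hi
    rcases a i hi with hh | hh
    · left
      have : p i + c - (p (i+1) + c) = p i - p (i+1) := by ring
      rw [this]; exact hh
    · right
      have : p (i+1) + c - (p i + c) = p (i+1) - p i := by ring
      rw [this]; exact hh

theorem connIn_ladder {b a v : Fin n → ℤ} (hv : v ∈ S ∨ -v ∈ S) (hvL : v ∈ L) (M : ℕ)
    (hnn : ∀ j : ℕ, j ≤ M → Nonneg (fun i => a i + (j : ℤ) * v i)) (hab : a - b ∈ L) :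
    ConnIn L S b a (fun i => a i + (M : ℤ) * v i) := by
  refine ⟨M, fun t => fun i => a i + (t : ℤ) * v i, ⟨?_, ?_⟩, by funext i; simp, rfl⟩
  · intro i hi
    refine ⟨hnn i hi, ?_⟩
    have : (fun j => a j + (i : ℤ) * v j) - b = (a - b) + (i : ℤ) • v := by
      funext j
      simp [zsmul_eq_mul]
      ring
    rw [this]
    exact L.add_mem hab (zsmul_mem hvL _)
  · intro i hi
    have hd : (fun j => a j + ((i + 1 : ℕ) : ℤ) * v j) - (fun j => a j + (i : ℤ) * v j) = v := by
      funext j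
      simp only [Pi.sub_apply]
      push_cast
      ring
    rcases hv with hh | hh
    · right; rw [hd]; exact hh
    · left
      have hd' : (fun j => a j + (i : ℤ) * v j) - (fun j => a j + ((i + 1 : ℕ) : ℤ) * v j)
          = -v := by
        funext j
        simp only [Pi.sub_apply, Pi.neg_apply]
        push_cast
        ring
      rw [hd']; exact hh

theorem stmt9_key (L : AddSubgroup (Fin n → ℤ)) (σ : Set (Fin n)) (S T : Set (Fin n → ℤ))
    (hsat : IsSaturatedOn L σ S T) (u : Fin n → ℤ)
    (huS : u ∈ S ∨ -u ∈ S) (huL : u ∈ L)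
    (hneg : suppV (vnegPart u) ⊆ σ) :
    IsSaturatedOn L (suppV u ∪ σ) S T := by
  classical
  intro b x y hx hy hconn
  set τ : Set (Fin n) := suppV u ∪ σ with hτ
  set γ : Fin n → ℤ := meetOn τ x y with hγ
  set μ : Fin n → ℤ := fun i => if i ∈ σ then 0 else γ i with hμ
  have hpm : ∀ i, vnegPart u i + u i = vposPart u i := by
    intro i; simp only [vnegPart, vposPart]; omega
  have hγnn : ∀ i, 0 ≤ γ i := by
    intro i
    rw [hγ]
    unfold meetOn
    split
    · exact le_min (hx.1 i) (hy.1 i)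
    · exact le_refl 0
  have hγx : ∀ i, γ i ≤ x i := by
    intro i
    rw [hγ]
    unfold meetOn
    split
    · exact min_le_left _ _
    · exact hx.1 i
  have hγy : ∀ i, γ i ≤ y i := by
    intro i
    rw [hγ]
    unfold meetOn
    split
    · exact min_le_right _ _
    · exact hy.1 i
  have hμnn : ∀ i, 0 ≤ μ i := by
    intro i; rw [hμ]; dsimp only; split
    · exact le_refl 0
    · exact hγnn i
  have hμx : ∀ i, μ i ≤ x i := by
    intro i; rw [hμ]; dsimp only; split
    · exact hx.1 i
    · exact hγx i
  have hμy : ∀ i, μ i ≤ y i := by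
    intro i; rw [hμ]; dsimp only; split
    · exact hy.1 i
    · exact hγy i
  set M : ℕ := (∑ j, γ j).toNat with hM
  have hγM : ∀ i, γ i ≤ (M : ℤ) := by
    intro i
    have hsum : γ i ≤ ∑ j, γ j :=
      Finset.single_le_sum (fun j _ => hγnn j) (Finset.mem_univ i)
    have : ((∑ j, γ j).toNat : ℤ) = ∑ j, γ j :=
      Int.toNat_of_nonneg (Finset.sum_nonneg fun j _ => hγnn j)
    rw [hM, this]
    exact hsum
  have hunz : ∀ i, i ∉ σ → vnegPart u i = 0 := by
    intro i hi
    by_contra h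
    exact hi (hneg h)
  have hupos : ∀ i, μ i ≠ 0 → 1 ≤ vposPart u i := by
    intro i h
    rw [hμ] at h
    dsimp only at h
    by_cases hiσ : i ∈ σ
    · simp [hiσ] at h
    · simp only [hiσ, if_false] at h
      have hiτ : i ∈ τ := by
        by_contra hiτ
        apply h
        rw [hγ]
        unfold meetOn
        simp [hiτ]
      have hiu : i ∈ suppV u := hiτ.resolve_right hiσ
      have h1 : u i ≠ 0 := hiu
      have h2 : vnegPart u i = 0 := hunz i hiσ
      simp only [vnegPart] at h2
      simp only [vposPart]
      omega
  have hunnn : ∀ i, 0 ≤ vnegPart u i := fun i => le_max_right _ _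
  have hupnn : ∀ i, 0 ≤ vposPart u i := fun i => le_max_right _ _
  -- the vectors
  set A : Fin n → ℤ := fun i => x i - μ i + (M : ℤ) * vnegPart u i with hA
  set B : Fin n → ℤ := fun i => y i - μ i + (M : ℤ) * vnegPart u i with hB
  set c : Fin n → ℤ := fun i => (M : ℤ) * vposPart u i - μ i with hc
  set b' : Fin n → ℤ := fun i => b i - μ i + (M : ℤ) * vnegPart u i with hb'
  have hcnn : Nonneg c := by
    intro i
    rw [hc]
    dsimp only
    by_cases h : μ i = 0
    · rw [h]
      simpa using mul_nonneg (Int.ofNat_nonneg M) (hupnn i)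
    · have h1 : 1 ≤ vposPart u i := hupos i h
      have h2 : μ i ≤ (M : ℤ) := by
        rw [hμ]; dsimp only
        split
        · exact le_trans (le_of_eq rfl) (by exact_mod_cast Int.ofNat_nonneg M)
        · exact hγM i
      nlinarith [Int.ofNat_nonneg M]
  -- step 1: ladder from A to x + c
  have hlad1 : ConnIn L S b' A (fun i => A i + (M : ℤ) * u i) := by
    apply connIn_ladder huS huL
    · intro j hj
      intro i
      have hjM : (j : ℤ) ≤ (M : ℤ) := by exact_mod_cast hj
      have h1 : 0 ≤ ((M : ℤ) - j) * vnegPart u i :=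
        mul_nonneg (by linarith) (hunnn i)
      have h2 : 0 ≤ (j : ℤ) * vposPart u i :=
        mul_nonneg (Int.ofNat_nonneg j) (hupnn i)
      have key : (M : ℤ) * vnegPart u i + (j : ℤ) * u i
          = ((M : ℤ) - j) * vnegPart u i + (j : ℤ) * vposPart u i := by
        linear_combination (j : ℤ) * (hpm i)
      have h3 : μ i ≤ x i := hμx i
      show (0:ℤ) ≤ x i - μ i + (M : ℤ) * vnegPart u i + (j : ℤ) * u i
      linarith [key]
    · have : A - b' = x - b := by
        funext i
        show x i - μ i + (M : ℤ) * vnegPart u i - (b i - μ i + (M : ℤ) * vnegPart u i)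
          = x i - b i
        ring
      rw [this]; exact hx.2
  have hMuL : (fun i => (M : ℤ) * u i) ∈ L := by
    have hz := zsmul_mem huL (M : ℤ)
    have e : (M : ℤ) • u = fun i => (M : ℤ) * u i := by
      funext i; rw [Pi.smul_apply, smul_eq_mul]
    rwa [e] at hz
  have hend1 : (fun i => A i + (M : ℤ) * u i) = x + c := by
    funext i
    show x i - μ i + (M : ℤ) * vnegPart u i + (M : ℤ) * u i
      = x i + ((M : ℤ) * vposPart u i - μ i)
    linear_combination (M : ℤ) * (hpm i)
  -- step 2: translated path from x + c to y + c
  have htr : ConnIn L S b' (x + c) (y + c) := by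
    have h1 : ConnIn L S (b + c) (x + c) (y + c) := connIn_translate' hconn c hcnn
    apply connIn_congr _ h1
    have : b + c - b' = fun i => (M : ℤ) * u i := by
      funext i
      show b i + ((M : ℤ) * vposPart u i - μ i) - (b i - μ i + (M : ℤ) * vnegPart u i)
        = (M : ℤ) * u i
      linear_combination (-(M : ℤ)) * (hpm i)
    rw [this]
    exact hMuL
  -- step 3: ladder from y + c down to B
  have hlad2 : ConnIn L S b' (y + c) (fun i => (y + c) i + (M : ℤ) * (-u) i) := by
    apply connIn_ladder (v := -u) ?_ (neg_mem huL)
    · intro j hj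
      intro i
      have hjM : (j : ℤ) ≤ (M : ℤ) := by exact_mod_cast hj
      have h1 : 0 ≤ ((M : ℤ) - j) * vposPart u i :=
        mul_nonneg (by linarith) (hupnn i)
      have h2 : 0 ≤ (j : ℤ) * vnegPart u i :=
        mul_nonneg (Int.ofNat_nonneg j) (hunnn i)
      have key : (M : ℤ) * vposPart u i + (j : ℤ) * (-u i)
          = ((M : ℤ) - j) * vposPart u i + (j : ℤ) * vnegPart u i := by
        linear_combination (-(j : ℤ)) * (hpm i)
      have h3 : μ i ≤ y i := hμy i
      show (0:ℤ) ≤ y i + ((M : ℤ) * vposPart u i - μ i) + (j : ℤ) * (-u) i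
      have h4 : (-u) i = -(u i) := rfl
      rw [h4]
      linarith [key]
    · have : y + c - b' = (y - b) + fun i => (M : ℤ) * u i := by
        funext i
        show y i + ((M : ℤ) * vposPart u i - μ i) - (b i - μ i + (M : ℤ) * vnegPart u i)
          = y i - b i + (M : ℤ) * u i
        linear_combination (-(M : ℤ)) * (hpm i)
      rw [this]
      exact L.add_mem hy.2 hMuL
    · rcases huS with h | h
      · exact Or.inr (by rwa [neg_neg])
      · exact Or.inl h
  have hend2 : (fun i => (y + c) i + (M : ℤ) * (-u) i) = B := by
    funext i
    show y i + ((M : ℤ) * vposPart u i - μ i) + (M : ℤ) * (-u) i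
      = y i - μ i + (M : ℤ) * vnegPart u i
    have h4 : (-u) i = -(u i) := rfl
    rw [h4]
    linear_combination (-(M : ℤ)) * (hpm i)
  -- assemble S-connectivity of A and B
  have hlad1' : ConnIn L S b' A (x + c) := by rw [← hend1]; exact hlad1
  have hlad2' : ConnIn L S b' (y + c) B := by rw [← hend2]; exact hlad2
  have hconnAB : ConnIn L S b' A B := connIn_trans' (connIn_trans' hlad1' htr) hlad2'
  have hAf : inFiber L b' A := by
    refine ⟨?_, ?_⟩
    · intro i
      have h1 := mul_nonneg (Int.ofNat_nonneg M) (hunnn i)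
      have h2 := hμx i
      show (0:ℤ) ≤ x i - μ i + (M : ℤ) * vnegPart u i
      linarith
    · have : A - b' = x - b := by
        funext i
        show x i - μ i + (M : ℤ) * vnegPart u i - (b i - μ i + (M : ℤ) * vnegPart u i)
          = x i - b i
        ring
      rw [this]; exact hx.2
  have hBf : inFiber L b' B := by
    refine ⟨?_, ?_⟩
    · intro i
      have h1 := mul_nonneg (Int.ofNat_nonneg M) (hunnn i)
      have h2 := hμy i
      show (0:ℤ) ≤ y i - μ i + (M : ℤ) * vnegPart u i
      linarith
    · have : B - b' = y - b := by
        funext i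
        show y i - μ i + (M : ℤ) * vnegPart u i - (b i - μ i + (M : ℤ) * vnegPart u i)
          = y i - b i
        ring
      rw [this]; exact hy.2
  have hres := hsat b' A B hAf hBf hconnAB
  -- identify the meet
  have hmeet : ∀ i, meetOn σ A B i = (if i ∈ σ then min (x i) (y i) else 0)
      + (if i ∈ σ then (M : ℤ) * vnegPart u i else 0) := by
    intro i
    unfold meetOn
    by_cases hi : i ∈ σ
    · simp only [hi, if_true, hA, hB]
      have hμ0 : μ i = 0 := by rw [hμ]; simp [hi]
      rw [hμ0]
      generalize (M : ℤ) * vnegPart u i = t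
      omega
    · simp [hi]
  have e2 : A - meetOn σ A B = x - meetOn τ x y := by
    funext i
    simp only [Pi.sub_apply]
    rw [hmeet i]
    simp only [hA]
    by_cases hi : i ∈ σ
    · have hiτ : i ∈ τ := Or.inr hi
      have hμ0 : μ i = 0 := by rw [hμ]; simp [hi]
      rw [hγ] at *
      unfold meetOn
      simp only [hi, if_true, hiτ, if_true, hμ0]
      ring
    · have hμi : μ i = γ i := by rw [hμ]; simp [hi]
      have hu0 : vnegPart u i = 0 := hunz i hi
      simp only [hi, if_false, hμi, hu0, hγ]
      ring
  have e3 : B - meetOn σ A B = y - meetOn τ x y := by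
    funext i
    simp only [Pi.sub_apply]
    rw [hmeet i]
    simp only [hB]
    by_cases hi : i ∈ σ
    · have hiτ : i ∈ τ := Or.inr hi
      have hμ0 : μ i = 0 := by rw [hμ]; simp [hi]
      rw [hγ] at *
      unfold meetOn
      simp only [hi, if_true, hiτ, if_true, hμ0]
      ring
    · have hμi : μ i = γ i := by rw [hμ]; simp [hi]
      have hu0 : vnegPart u i = 0 := hunz i hi
      simp only [hi, if_false, hμi, hu0, hγ]
      ring
  have e1 : b' - meetOn σ A B = b - meetOn τ x y := by
    funext i
    simp only [Pi.sub_apply]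
    rw [hmeet i]
    simp only [hb']
    by_cases hi : i ∈ σ
    · have hiτ : i ∈ τ := Or.inr hi
      have hμ0 : μ i = 0 := by rw [hμ]; simp [hi]
      rw [hγ] at *
      unfold meetOn
      simp only [hi, if_true, hiτ, if_true, hμ0]
      ring
    · have hμi : μ i = γ i := by rw [hμ]; simp [hi]
      have hu0 : vnegPart u i = 0 := hunz i hi
      simp only [hi, if_false, hμi, hu0, hγ]
      ring
  rw [e1, e2, e3] at hres
  exact hres

end StmtNineHelpers

/-- if `T` is `σ`-saturated on `S` and `u ∈ S` has
`supp(u⁻) ⊆ σ` or `supp(u⁺) ⊆ σ`, then `T` is `(supp(u) ∪ σ)`-saturated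
on `S`. -/
theorem stmt9 {n : ℕ} (L : AddSubgroup (Fin n → ℤ))
    (σ : Set (Fin n)) (S T : Set (Fin n → ℤ))
    (hS : ∀ s ∈ S, s ∈ L) (hT : ∀ s ∈ T, s ∈ L)
    (hsat : IsSaturatedOn L σ S T)
    (u : Fin n → ℤ) (hu : u ∈ S)
    (hsupp : suppV (vnegPart u) ⊆ σ ∨ suppV (vposPart u) ⊆ σ) :
    IsSaturatedOn L (suppV u ∪ σ) S T := by
  rcases hsupp with h | h
  · exact stmt9_key L σ S T hsat u (Or.inl hu) (hS u hu) h
  · have h2 : suppV (vnegPart (-u)) ⊆ σ := by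
      have : vnegPart (-u) = vposPart u := by
        funext i; simp [vnegPart, vposPart]
      rwa [this]
    have h3 : (-u) ∈ S ∨ -(-u) ∈ S := Or.inr (by rwa [neg_neg])
    have := stmt9_key L σ S T hsat (-u) h3 (neg_mem (hS u hu)) h2
    have hsupp_eq : suppV (-u) = suppV u := by
      ext i; simp [suppV]
    rwa [hsupp_eq] at this
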